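/- If g is continuously differentiable on some half-line, g(x) ≠ 0 eventually, and lim_{x→∞} x·g'(x)/g(x) = α with α < β, then eventually |g(x)| ≤ C·x^β for some constant C > 0. -/

import Mathlib

open Filter Set

/-- If `g` is C¹ on `[x₀, ∞)`, nonvanishing there, and
`x * g'(x) / g(x) → α` with `α < β`, then eventually `|g x| ≤ C * x ^ β`
for some constant `C > 0`. -/
theorem stmt1 (g : ℝ → ℝ) (x₀ α β : ℝ) (hx₀ : 0 < x₀)
    (hg : ContDiffOn ℝ 1 g (Ici x₀))
    (hne : ∀ x ∈ Ici x₀, g x ≠ 0)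
    (hlim : Tendsto (fun x => x * deriv g x / g x) atTop (nhds α))
    (hαβ : α < β) :
    ∃ C > 0, ∀ᶠ x in atTop, |g x| ≤ C * x ^ β := by
  have hev : ∀ᶠ x in atTop, x * deriv g x / g x < β :=
    hlim.eventually (eventually_lt_nhds hαβ)
  obtain ⟨N, hN⟩ := eventually_atTop.1 hev
  set X : ℝ := max N (max x₀ 1) with hXdef
  have hXx₀ : x₀ ≤ X := le_trans (le_max_left _ _) (le_max_right _ _)
  have hX1 : (1 : ℝ) ≤ X := le_trans (le_max_right _ _) (le_max_right _ _)
  have hX0 : (0 : ℝ) < X := lt_of_lt_of_le one_pos hX1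
  have hXN : N ≤ X := le_max_left _ _
  set f : ℝ → ℝ := fun x => Real.log (g x) - β * Real.log x with hf
  -- differentiability of g at points > X
  have hgd : ∀ x ∈ Ioi X, DifferentiableAt ℝ g x := by
    intro x hx
    have hx' : x₀ < x := lt_of_le_of_lt hXx₀ hx
    exact ((hg.differentiableOn one_ne_zero) x hx'.le).differentiableAt (Ici_mem_nhds hx')
  have hcont : ContinuousOn f (Ici X) := by
    apply ContinuousOn.sub
    · exact ((hg.continuousOn.mono (Ici_subset_Ici.2 hXx₀)).log
        (fun x hx => hne x (le_trans hXx₀ hx)))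
    · exact continuousOn_const.mul (continuousOn_id.log
        (fun x hx => ne_of_gt (lt_of_lt_of_le hX0 hx)))
  have hdiff : DifferentiableOn ℝ f (interior (Ici X)) := by
    rw [interior_Ici]
    intro x hx
    have hx0 : (0 : ℝ) < x := lt_trans hX0 hx
    have hgx : g x ≠ 0 := hne x (le_trans hXx₀ (le_of_lt hx))
    exact (((hgd x hx).log hgx).sub
      ((Real.differentiableAt_log hx0.ne').const_mul β)).differentiableWithinAt
  have hderiv : ∀ x ∈ interior (Ici X), deriv f x ≤ 0 := by
    rw [interior_Ici]
    intro x hx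
    have hx0 : (0 : ℝ) < x := lt_trans hX0 hx
    have hgx : g x ≠ 0 := hne x (le_trans hXx₀ (le_of_lt hx))
    have hd := (hgd x hx).hasDerivAt
    have hF : HasDerivAt f (deriv g x / g x - β * x⁻¹) x :=
      (hd.log hgx).sub ((Real.hasDerivAt_log hx0.ne').const_mul β)
    rw [hF.deriv]
    have hb : x * deriv g x / g x < β := hN x (le_of_lt (lt_of_le_of_lt hXN hx))
    have h2 : deriv g x / g x < β / x := by
      rw [lt_div_iff₀ hx0]
      calc deriv g x / g x * x = x * deriv g x / g x := by ring
        _ < β := hb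
    have : β * x⁻¹ = β / x := by rw [div_eq_mul_inv]
    rw [this]
    linarith
  have hA : AntitoneOn f (Ici X) :=
    antitoneOn_of_deriv_nonpos (convex_Ici X) hcont hdiff hderiv
  have hgX : g X ≠ 0 := hne X hXx₀
  refine ⟨|g X| / X ^ β, div_pos (abs_pos.2 hgX) (Real.rpow_pos_of_pos hX0 β), ?_⟩
  filter_upwards [eventually_ge_atTop X] with x hx
  have hx0 : (0 : ℝ) < x := lt_of_lt_of_le hX0 hx
  have hgx : g x ≠ 0 := hne x (le_trans hXx₀ hx)
  have hfle : f x ≤ f X := hA self_mem_Ici hx hx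
  have hC0 : (0 : ℝ) < |g X| / X ^ β :=
    div_pos (abs_pos.2 hgX) (Real.rpow_pos_of_pos hX0 β)
  have hlogC : Real.log (|g X| / X ^ β) = Real.log (g X) - β * Real.log X := by
    rw [Real.log_div (abs_ne_zero.2 hgX) (Real.rpow_pos_of_pos hX0 β).ne',
      Real.log_abs, Real.log_rpow hX0]
  calc |g x| = Real.exp (Real.log (g x)) := by
        rw [← Real.log_abs, Real.exp_log (abs_pos.2 hgx)]
    _ ≤ Real.exp (Real.log (|g X| / X ^ β) + β * Real.log x) := by
        apply Real.exp_le_exp.2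
        rw [hlogC]
        have := hfle
        simp only [hf] at this
        linarith
    _ = |g X| / X ^ β * x ^ β := by
        rw [Real.exp_add, Real.exp_log hC0, Real.rpow_def_of_pos hx0, mul_comm β]
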